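/- Let n ∈ ℕ. Let φ : ℝ → ℝ be continuous, not identically zero, vanishing outside (−2^{−4}, 2^{−4}), with ∫_ℝ x^m φ(x) dx = 0 for every integer 0 ≤ m ≤ n+1, and set φ_k(y) = 2^k φ(2^k y) for k ∈ ℕ. Let ψ : ℝ → ℝ be locally integrable and suppose there are real numbers A_0 ≠ A_1 and c_0,…,c_{n−1} such that ψ(x) = A_0 (x−1/2)^n + Σ_{j=0}^{n−1} c_j (x−1/2)^j on [0, 1/2] and ψ(x) = A_1 (x−1/2)^n + Σ_{j=0}^{n−1} c_j (x−1/2)^j on [1/2, 1]. Then there exist c_0' ∈ (0,1) and a nondegenerate closed interval J ⊆ [1/4, 3/4] such that for every k ∈ ℕ, every m ∈ ℤ, and every x ∈ 2^{−k} m + 2^{−k} J, one has |(φ_k * ψ_{k,m})(x)| ≥ c_0', where ψ_{k,m}(y) = ψ(2^k y − m). -/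

import Mathlib

open MeasureTheory Set Finset Real intervalIntegral

namespace Stmt5Aux
noncomputable def Hf (φ : ℝ → ℝ) (j : ℕ) (s : ℝ) : ℝ := ∫ u in (-1:ℝ)..s, φ u * (s - u) ^ j

lemma Hf_eq_sum {φ : ℝ → ℝ} (hcont : Continuous φ) (j : ℕ) (s : ℝ) :
    Hf φ j s = ∑ i ∈ Finset.range (j+1),
      (j.choose i : ℝ) * ((-1)^i * s^(j-i)) * ∫ u in (-1:ℝ)..s, u ^ i * φ u := by
  unfold Hf
  have hpt : ∀ u : ℝ, φ u * (s - u)^j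
      = ∑ i ∈ Finset.range (j+1), (j.choose i : ℝ) * ((-1)^i * s^(j-i)) * (u^i * φ u) := by
    intro u
    rw [sub_eq_add_neg, add_comm, add_pow, Finset.mul_sum]
    refine Finset.sum_congr rfl fun i _ => ?_
    rw [neg_pow]
    ring
  simp_rw [hpt]
  rw [intervalIntegral.integral_finset_sum]
  · exact Finset.sum_congr rfl fun i _ => intervalIntegral.integral_const_mul _ _
  · intro i _
    exact (Continuous.intervalIntegrable (by continuity) _ _)

lemma G_hasDeriv {φ : ℝ → ℝ} (hcont : Continuous φ) (i : ℕ) (s : ℝ) :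
    HasDerivAt (fun r => ∫ u in (-1:ℝ)..r, u ^ i * φ u) (s ^ i * φ s) s := by
  have hc : Continuous fun u : ℝ => u ^ i * φ u := by continuity
  exact intervalIntegral.integral_hasDerivAt_right (hc.intervalIntegrable _ _)
    (hc.stronglyMeasurable.stronglyMeasurableAtFilter) hc.continuousAt


lemma Hf_hasDeriv {φ : ℝ → ℝ} (hcont : Continuous φ) (j : ℕ) (s : ℝ) :
    HasDerivAt (Hf φ (j+1)) (((j:ℝ)+1) * Hf φ j s) s := by
  have hfun : Hf φ (j+1) = fun r => ∑ i ∈ Finset.range (j+2),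
      ((j+1).choose i : ℝ) * ((-1)^i * r^(j+1-i)) * ∫ u in (-1:ℝ)..r, u ^ i * φ u :=
    funext fun r => Hf_eq_sum hcont (j+1) r
  rw [hfun]
  have hterm : ∀ i ∈ Finset.range (j+2), HasDerivAt
      (fun r => ((j+1).choose i : ℝ) * ((-1)^i * r^(j+1-i)) * ∫ u in (-1:ℝ)..r, u ^ i * φ u)
      (((j+1).choose i : ℝ) * ((-1)^i * ((j+1-i : ℕ) * s^(j+1-i-1))) * (∫ u in (-1:ℝ)..s, u ^ i * φ u)
        + ((j+1).choose i : ℝ) * ((-1)^i * s^(j+1-i)) * (s ^ i * φ s)) s := by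
    intro i _
    have h1 : HasDerivAt (fun r : ℝ => ((j+1).choose i : ℝ) * ((-1)^i * r^(j+1-i)))
        (((j+1).choose i : ℝ) * ((-1)^i * ((j+1-i : ℕ) * s^(j+1-i-1)))) s :=
      (((hasDerivAt_pow (j+1-i) s).const_mul ((-1:ℝ)^i)).const_mul _)
    exact h1.mul (G_hasDeriv hcont i s)
  have hD := HasDerivAt.sum hterm
  have hsum2 : ∑ i ∈ Finset.range (j+2), ((j+1).choose i : ℝ) * ((-1)^i * s^(j+1-i)) * (s ^ i * φ s) = 0 := by
    have : ∀ i ∈ Finset.range (j+2), ((j+1).choose i : ℝ) * ((-1)^i * s^(j+1-i)) * (s ^ i * φ s)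
        = ((-1)^i * ((j+1).choose i : ℝ)) * (s^(j+1) * φ s) := by
      intro i hi
      have hle : i ≤ j + 1 := Nat.lt_succ_iff.mp (Finset.mem_range.mp hi)
      have : s^(j+1-i) * s^i = s^(j+1) := by
        rw [← pow_add, Nat.sub_add_cancel hle]
      linear_combination (((j+1).choose i : ℝ) * (-1)^i * φ s) * this
    rw [Finset.sum_congr rfl this, ← Finset.sum_mul]
    have h : (∑ i ∈ Finset.range (j+2), (-1:ℤ)^i * ((j+1).choose i)) = 0 := by
      simpa using Int.alternating_sum_range_choose (n := j+1)
    have hz : ∑ i ∈ Finset.range (j+2), ((-1:ℝ)^i * ((j+1).choose i : ℝ)) = 0 := by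
      exact_mod_cast h
    rw [hz, zero_mul]
  have hsum1 : ∑ i ∈ Finset.range (j+2),
      ((j+1).choose i : ℝ) * ((-1)^i * ((j+1-i : ℕ) * s^(j+1-i-1))) * (∫ u in (-1:ℝ)..s, u ^ i * φ u)
      = ((j:ℝ)+1) * Hf φ j s := by
    rw [Hf_eq_sum hcont j s, Finset.mul_sum]
    rw [Finset.sum_range_succ (n := j+1)]
    have hlast : ((j+1).choose (j+1) : ℝ) * ((-1)^(j+1) * ((j+1-(j+1) : ℕ) * s^(j+1-(j+1)-1))) * (∫ u in (-1:ℝ)..s, u ^ (j+1) * φ u) = 0 := by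
      simp
    rw [hlast, add_zero]
    refine Finset.sum_congr rfl fun i hi => ?_
    have hle : i ≤ j := Nat.lt_succ_iff.mp (Finset.mem_range.mp hi)
    have hexp : j + 1 - i - 1 = j - i := by omega
    have hcoef : ((j+1).choose i : ℝ) * ((j+1-i : ℕ) : ℝ) = ((j:ℝ)+1) * (j.choose i : ℝ) := by
      have := Nat.choose_mul_succ_eq j i
      have h2 : (j.choose i) * (j+1) = ((j+1).choose i) * (j+1-i) := this
      have := congrArg (fun x : ℕ => (x : ℝ)) h2
      push_cast at this
      linarith
    rw [hexp]
    linear_combination ((-1:ℝ)^i * s^(j-i) * ∫ u in (-1:ℝ)..s, u ^ i * φ u) * hcoef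
  rw [Finset.sum_add_distrib, hsum1, hsum2, add_zero, Finset.sum_fn] at hD
  exact hD

lemma Hf_continuous {φ : ℝ → ℝ} (hcont : Continuous φ) (j : ℕ) : Continuous (Hf φ j) := by
  have : Hf φ j = fun s => ∑ i ∈ Finset.range (j+1),
      (j.choose i : ℝ) * ((-1)^i * s^(j-i)) * ∫ u in (-1:ℝ)..s, u ^ i * φ u :=
    funext fun s => Hf_eq_sum hcont j s
  rw [this]
  refine continuous_finset_sum _ fun i _ => ?_
  have h1 : Continuous fun s : ℝ => ∫ u in (-1:ℝ)..s, u ^ i * φ u :=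
    continuous_iff_continuousAt.mpr fun s => (G_hasDeriv hcont i s).continuousAt
  continuity

lemma Hf_zero_step {φ : ℝ → ℝ} (hcont : Continuous φ) (j : ℕ)
    (h : ∀ s ∈ Ioo (-(1:ℝ)/4) (1/4), Hf φ (j+1) s = 0) :
    ∀ s ∈ Ioo (-(1:ℝ)/4) (1/4), Hf φ j s = 0 := by
  intro s hs
  have hev : Hf φ (j+1) =ᶠ[nhds s] (fun _ => (0:ℝ)) :=
    Filter.eventuallyEq_of_mem (isOpen_Ioo.mem_nhds hs) h
  have h1 : HasDerivAt (Hf φ (j+1)) (((j:ℝ)+1) * Hf φ j s) s := Hf_hasDeriv hcont j s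
  have h2 : HasDerivAt (Hf φ (j+1)) 0 s := by
    exact (hasDerivAt_const s (0:ℝ)).congr_of_eventuallyEq hev
  have := h1.unique h2
  have hj : ((j:ℝ)+1) ≠ 0 := by positivity
  exact (mul_eq_zero.mp this).resolve_left hj

lemma Hf_exists_ne {φ : ℝ → ℝ} (hcont : Continuous φ)
    (hsupp : ∀ x : ℝ, x ∉ Set.Ioo (-(2 : ℝ) ^ (-4 : ℤ)) ((2 : ℝ) ^ (-4 : ℤ)) → φ x = 0)
    (hne : ∃ x : ℝ, φ x ≠ 0) (n : ℕ) :
    ∃ s₀ ∈ Ioo (-(1:ℝ)/4) (1/4), Hf φ n s₀ ≠ 0 := by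
  by_contra hcon
  push_neg at hcon
  have hall : ∀ j, ∀ s ∈ Ioo (-(1:ℝ)/4) (1/4), Hf φ (n - j) s = 0 := by
    intro j
    induction j with
    | zero => simpa using hcon
    | succ j ih =>
      rcases le_or_gt n j with hle | hlt
      · have : n - (j+1) = n - j := by omega
        rw [this]; exact ih
      · have : n - j = (n - (j+1)) + 1 := by omega
        rw [this] at ih
        exact Hf_zero_step hcont _ ih
  have h0 : ∀ s ∈ Ioo (-(1:ℝ)/4) (1/4), Hf φ 0 s = 0 := by
    have := hall n
    simpa using this
  -- Hf φ 0 s = ∫ u in -1..s, φ u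
  have hH0 : Hf φ 0 = fun s => ∫ u in (-1:ℝ)..s, u ^ 0 * φ u := by
    funext s; unfold Hf; congr 1; funext u; ring
  have hφ0 : ∀ s ∈ Ioo (-(1:ℝ)/4) (1/4), φ s = 0 := by
    intro s hs
    have hev : Hf φ 0 =ᶠ[nhds s] (fun _ => (0:ℝ)) :=
      Filter.eventuallyEq_of_mem (isOpen_Ioo.mem_nhds hs) h0
    have h1 : HasDerivAt (Hf φ 0) (s ^ 0 * φ s) s := by
      rw [hH0]; exact G_hasDeriv hcont 0 s
    have h2 : HasDerivAt (Hf φ 0) 0 s :=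
      (hasDerivAt_const s (0:ℝ)).congr_of_eventuallyEq hev
    have := h1.unique h2
    simpa using this
  obtain ⟨x, hx⟩ := hne
  apply hx
  by_cases hmem : x ∈ Set.Ioo (-(2 : ℝ) ^ (-4 : ℤ)) ((2 : ℝ) ^ (-4 : ℤ))
  · apply hφ0
    have h16 : ((2:ℝ) ^ (-4:ℤ)) = 1/16 := by norm_num
    rw [h16] at hmem
    constructor <;> [linarith [hmem.1]; linarith [hmem.2]]
  · exact hsupp x hmem

lemma hcs_of {φ : ℝ → ℝ}
    (hsupp : ∀ x : ℝ, x ∉ Set.Ioo (-(2 : ℝ) ^ (-4 : ℤ)) ((2 : ℝ) ^ (-4 : ℤ)) → φ x = 0) :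
    HasCompactSupport φ := by
  apply HasCompactSupport.intro (isCompact_Icc (a := -(1/16:ℝ)) (b := 1/16))
  intro x hx
  apply hsupp
  intro hmem
  have h16 : ((2:ℝ) ^ (-4:ℤ)) = 1/16 := by norm_num
  rw [h16] at hmem
  exact hx ⟨le_of_lt (by linarith [hmem.1]), le_of_lt hmem.2⟩

lemma int_poly {φ : ℝ → ℝ} (hcont : Continuous φ)
    (hsupp : ∀ x : ℝ, x ∉ Set.Ioo (-(2 : ℝ) ^ (-4 : ℤ)) ((2 : ℝ) ^ (-4 : ℤ)) → φ x = 0)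
    (q : ℝ → ℝ) (hq : Continuous q) :
    Integrable (fun u => φ u * q u) := by
  exact (hcont.mul hq).integrable_of_hasCompactSupport ((hcs_of hsupp).mul_right)

lemma mom_poly {n : ℕ} {φ : ℝ → ℝ} (hcont : Continuous φ)
    (hsupp : ∀ x : ℝ, x ∉ Set.Ioo (-(2 : ℝ) ^ (-4 : ℤ)) ((2 : ℝ) ^ (-4 : ℤ)) → φ x = 0)
    (hmom : ∀ m : ℕ, m ≤ n + 1 → ∫ x : ℝ, x ^ m * φ x = 0)
    (j : ℕ) (hj : j ≤ n + 1) (s : ℝ) :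
    ∫ u : ℝ, φ u * (s - u) ^ j = 0 := by
  have hpt : ∀ u : ℝ, φ u * (s - u)^j
      = ∑ i ∈ Finset.range (j+1), (j.choose i : ℝ) * ((-1)^i * s^(j-i)) * (u^i * φ u) := by
    intro u
    rw [sub_eq_add_neg, add_comm, add_pow, Finset.mul_sum]
    refine Finset.sum_congr rfl fun i _ => ?_
    rw [neg_pow]; ring
  simp_rw [hpt]
  rw [MeasureTheory.integral_finset_sum]
  · refine Finset.sum_eq_zero fun i hi => ?_
    rw [MeasureTheory.integral_const_mul]
    have hi' : i ≤ n + 1 := le_trans (Nat.lt_succ_iff.mp (Finset.mem_range.mp hi)) hj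
    rw [hmom i hi', mul_zero]
  · intro i _
    have := int_poly hcont hsupp (fun u => u ^ i) (by continuity)
    have h2 : Integrable (fun u : ℝ => u ^ i * φ u) := by
      simpa [mul_comm] using this
    exact h2.const_mul _

lemma key_identity {n : ℕ} {φ ψ : ℝ → ℝ} (hcont : Continuous φ)
    (hsupp : ∀ x : ℝ, x ∉ Set.Ioo (-(2 : ℝ) ^ (-4 : ℤ)) ((2 : ℝ) ^ (-4 : ℤ)) → φ x = 0)
    (hmom : ∀ m : ℕ, m ≤ n + 1 → ∫ x : ℝ, x ^ m * φ x = 0)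
    (A₀ A₁ : ℝ) (c : ℕ → ℝ)
    (hleft : ∀ x ∈ Set.Icc (0 : ℝ) (1 / 2),
      ψ x = A₀ * (x - 1 / 2) ^ n + ∑ j ∈ Finset.range n, c j * (x - 1 / 2) ^ j)
    (hright : ∀ x ∈ Set.Icc (1 / 2 : ℝ) 1,
      ψ x = A₁ * (x - 1 / 2) ^ n + ∑ j ∈ Finset.range n, c j * (x - 1 / 2) ^ j)
    (t : ℝ) (ht : t ∈ Set.Icc (1/4:ℝ) (3/4)) :
    ∫ u : ℝ, φ u * ψ (t - u) = (A₁ - A₀) * Hf φ n (t - 1/2) := by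
  set s : ℝ := t - 1/2 with hs
  have h16 : ((2:ℝ) ^ (-4:ℤ)) = 1/16 := by norm_num
  have hsupp' : ∀ u : ℝ, φ u ≠ 0 → -1/16 < u ∧ u < 1/16 := by
    intro u hu
    by_contra hcon
    apply hu
    apply hsupp
    rw [h16]
    intro hmem
    exact hcon ⟨by linarith [hmem.1], hmem.2⟩
  have hpt : ∀ u : ℝ, φ u * ψ (t - u)
      = (φ u * (A₀ * (s - u) ^ n + ∑ j ∈ Finset.range n, c j * (s - u) ^ j))
        + (A₁ - A₀) * ((Set.Ioc (-1:ℝ) s).indicator (fun v => φ v * (s - v)^n) u) := by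
    intro u
    by_cases hu : φ u = 0
    · rw [Set.indicator_apply]
      split_ifs <;> simp [hu]
    · obtain ⟨hu1, hu2⟩ := hsupp' u hu
      have harg : t - u - 1/2 = s - u := by rw [hs]; ring
      by_cases hle : u ≤ s
      · have hmem : t - u ∈ Set.Icc (1/2:ℝ) 1 := by
          constructor
          · have : s - u ≥ 0 := by linarith
            rw [hs] at this; linarith
          · linarith [ht.2]
        rw [hright _ hmem, harg]
        rw [Set.indicator_of_mem (by exact ⟨by linarith, hle⟩)]
        ring
      · push_neg at hle
        have hmem : t - u ∈ Set.Icc (0:ℝ) (1/2) := by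
          constructor
          · linarith [ht.1]
          · have : s - u < 0 := by linarith
            rw [hs] at this; linarith
        rw [hleft _ hmem, harg]
        rw [Set.indicator_of_notMem (by intro h; exact absurd h.2 (not_le.mpr hle))]
        ring
  have hQ : Continuous fun u : ℝ => A₀ * (s - u) ^ n + ∑ j ∈ Finset.range n, c j * (s - u) ^ j :=
    (continuous_const.mul ((continuous_const.sub continuous_id).pow n)).add
      (continuous_finset_sum _ fun j _ => continuous_const.mul ((continuous_const.sub continuous_id).pow j))
  have hf1 : Integrable (fun u => φ u * (A₀ * (s - u) ^ n + ∑ j ∈ Finset.range n, c j * (s - u) ^ j)) :=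
    int_poly hcont hsupp _ hQ
  have hf2 : Integrable ((Set.Ioc (-1:ℝ) s).indicator (fun v => φ v * (s - v)^n)) :=
    (int_poly hcont hsupp (fun v => (s - v)^n) ((continuous_const.sub continuous_id).pow n)).indicator measurableSet_Ioc
  calc ∫ u : ℝ, φ u * ψ (t - u)
      = ∫ u : ℝ, ((φ u * (A₀ * (s - u) ^ n + ∑ j ∈ Finset.range n, c j * (s - u) ^ j))
        + (A₁ - A₀) * ((Set.Ioc (-1:ℝ) s).indicator (fun v => φ v * (s - v)^n) u)) := by
        exact congrArg _ (funext hpt)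
    _ = (∫ u : ℝ, φ u * (A₀ * (s - u) ^ n + ∑ j ∈ Finset.range n, c j * (s - u) ^ j))
        + (A₁ - A₀) * ∫ u : ℝ, (Set.Ioc (-1:ℝ) s).indicator (fun v => φ v * (s - v)^n) u := by
        rw [MeasureTheory.integral_add hf1 (hf2.const_mul _), MeasureTheory.integral_const_mul]
    _ = 0 + (A₁ - A₀) * Hf φ n s := by
        congr 1
        · -- first integral is zero
          have hexp : ∀ u : ℝ, φ u * (A₀ * (s - u) ^ n + ∑ j ∈ Finset.range n, c j * (s - u) ^ j)
              = A₀ * (φ u * (s - u) ^ n) + ∑ j ∈ Finset.range n, c j * (φ u * (s - u) ^ j) := by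
            intro u
            rw [mul_add, Finset.mul_sum]
            congr 1
            · ring
            · exact Finset.sum_congr rfl fun j _ => by ring
          simp_rw [hexp]
          rw [MeasureTheory.integral_add ((int_poly hcont hsupp (fun u => (s-u)^n) ((continuous_const.sub continuous_id).pow n)).const_mul _)
              (MeasureTheory.integrable_finset_sum _ (fun j _ =>
                (int_poly hcont hsupp (fun u => (s-u)^j) ((continuous_const.sub continuous_id).pow j)).const_mul _)),
            MeasureTheory.integral_const_mul,
            MeasureTheory.integral_finset_sum _ (fun j _ =>
                (int_poly hcont hsupp (fun u => (s-u)^j) ((continuous_const.sub continuous_id).pow j)).const_mul _)]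
          rw [mom_poly hcont hsupp hmom n (by omega) s, mul_zero, zero_add]
          refine Finset.sum_eq_zero fun j hj => ?_
          rw [MeasureTheory.integral_const_mul,
            mom_poly hcont hsupp hmom j (by have := Finset.mem_range.mp hj; omega) s, mul_zero]
        · congr 1
          rw [MeasureTheory.integral_indicator measurableSet_Ioc]
          rw [Hf, intervalIntegral.integral_of_le (by rw [hs]; linarith [ht.1])]
    _ = (A₁ - A₀) * Hf φ n s := by rw [zero_add]


lemma scaling {φ ψ : ℝ → ℝ} (k : ℕ) (m : ℤ) (t x : ℝ)
    (hx : x = (2:ℝ)^(-(k:ℤ)) * ((m:ℝ) + t)) :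
    ∫ y : ℝ, (2:ℝ)^(k:ℕ) * φ ((2:ℝ)^(k:ℕ) * y) * ψ ((2:ℝ)^(k:ℕ) * (x - y) - (m:ℝ))
      = ∫ u : ℝ, φ u * ψ (t - u) := by
  have h2k : ((2:ℝ)^(k:ℕ)) * (2:ℝ)^(-(k:ℤ)) = 1 := by
    rw [← zpow_natCast (2:ℝ) k, ← zpow_add₀ (by norm_num : (2:ℝ) ≠ 0)]
    simp
  have harg : ∀ y : ℝ, (2:ℝ)^(k:ℕ) * (x - y) - (m:ℝ) = t - (2:ℝ)^(k:ℕ) * y := by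
    intro y
    rw [hx]
    have h1 : (2:ℝ)^(k:ℕ) * ((2:ℝ)^(-(k:ℤ)) * ((m:ℝ) + t)) = (m:ℝ) + t := by
      rw [← mul_assoc, h2k, one_mul]
    rw [mul_sub, h1]; ring
  simp_rw [harg, mul_assoc]
  rw [MeasureTheory.integral_const_mul]
  have hcomp := MeasureTheory.Measure.integral_comp_mul_left (fun u => φ u * ψ (t - u)) ((2:ℝ)^(k:ℕ))
  rw [hcomp, smul_eq_mul, abs_of_pos (by positivity : (0:ℝ) < ((2:ℝ)^(k:ℕ))⁻¹), ← mul_assoc,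
    mul_inv_cancel₀ (by positivity : ((2:ℝ)^(k:ℕ)) ≠ 0), one_mul]

end Stmt5Aux

open Stmt5Aux in
theorem stmt_5
    (n : ℕ) (φ : ℝ → ℝ)
    (hcont : Continuous φ) (hne : ∃ x : ℝ, φ x ≠ 0)
    (hsupp : ∀ x : ℝ, x ∉ Set.Ioo (-(2 : ℝ) ^ (-4 : ℤ)) ((2 : ℝ) ^ (-4 : ℤ)) → φ x = 0)
    (hmom : ∀ m : ℕ, m ≤ n + 1 → ∫ x : ℝ, x ^ m * φ x = 0)
    (ψ : ℝ → ℝ) (hψ : MeasureTheory.LocallyIntegrable ψ)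
    (A₀ A₁ : ℝ) (hA : A₀ ≠ A₁) (c : ℕ → ℝ)
    (hleft : ∀ x ∈ Set.Icc (0 : ℝ) (1 / 2),
      ψ x = A₀ * (x - 1 / 2) ^ n + ∑ j ∈ Finset.range n, c j * (x - 1 / 2) ^ j)
    (hright : ∀ x ∈ Set.Icc (1 / 2 : ℝ) 1,
      ψ x = A₁ * (x - 1 / 2) ^ n + ∑ j ∈ Finset.range n, c j * (x - 1 / 2) ^ j) :
    ∃ c₀ ∈ Set.Ioo (0 : ℝ) 1, ∃ a b : ℝ, a < b ∧
      Set.Icc a b ⊆ Set.Icc (1 / 4 : ℝ) (3 / 4) ∧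
      ∀ k : ℕ, ∀ m : ℤ, ∀ x : ℝ,
        (∃ t ∈ Set.Icc a b, x = (2 : ℝ) ^ (-(k : ℤ)) * ((m : ℝ) + t)) →
        c₀ ≤ |∫ y : ℝ, (2 : ℝ) ^ (k : ℕ) * φ ((2 : ℝ) ^ (k : ℕ) * y) *
                ψ ((2 : ℝ) ^ (k : ℕ) * (x - y) - (m : ℝ))| := by
  classical
  obtain ⟨s₀, hs₀mem, hs₀ne⟩ := Hf_exists_ne hcont hsupp hne n
  have hHcont : Continuous (Hf φ n) := Hf_continuous hcont n
  set ε : ℝ := |Hf φ n s₀| with hε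
  have hεpos : 0 < ε := abs_pos.mpr hs₀ne
  have hopen : IsOpen ({s : ℝ | ε/2 < |Hf φ n s|} ∩ Set.Ioo (-(1:ℝ)/4) (1/4)) :=
    (isOpen_lt continuous_const (continuous_abs.comp hHcont)).inter isOpen_Ioo
  have hmem0 : s₀ ∈ ({s : ℝ | ε/2 < |Hf φ n s|} ∩ Set.Ioo (-(1:ℝ)/4) (1/4)) :=
    ⟨by simp only [Set.mem_setOf_eq, ← hε]; linarith, hs₀mem⟩
  obtain ⟨δ, hδpos, hball⟩ := Metric.isOpen_iff.mp hopen s₀ hmem0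
  have hAne : (0:ℝ) < |A₁ - A₀| := abs_pos.mpr (sub_ne_zero.mpr (Ne.symm hA))
  set c₀ : ℝ := min (|A₁ - A₀| * (ε/2)) (1/2) with hc₀
  have hkey : ∀ t ∈ Set.Icc (s₀ + 1/2 - δ/2) (s₀ + 1/2 + δ/2),
      t - 1/2 ∈ ({s : ℝ | ε/2 < |Hf φ n s|} ∩ Set.Ioo (-(1:ℝ)/4) (1/4)) := by
    intro t ht
    apply hball
    rw [Metric.mem_ball, Real.dist_eq]
    rw [abs_sub_lt_iff]
    constructor <;> [linarith [ht.2]; linarith [ht.1]]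
  refine ⟨c₀, ⟨lt_min (by positivity) (by norm_num), lt_of_le_of_lt (min_le_right _ _) (by norm_num)⟩,
    s₀ + 1/2 - δ/2, s₀ + 1/2 + δ/2, by linarith, ?_, ?_⟩
  · intro t ht
    have := (hkey t ht).2
    exact ⟨by linarith [this.1], by linarith [this.2]⟩
  · rintro k m x ⟨t, htab, hx⟩
    have hts := hkey t htab
    have htIcc : t ∈ Set.Icc (1/4:ℝ) (3/4) :=
      ⟨by linarith [hts.2.1], by linarith [hts.2.2]⟩
    rw [scaling k m t x hx, key_identity hcont hsupp hmom A₀ A₁ c hleft hright t htIcc]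
    rw [abs_mul]
    have h1 : ε/2 ≤ |Hf φ n (t - 1/2)| := le_of_lt hts.1
    calc c₀ ≤ |A₁ - A₀| * (ε/2) := min_le_left _ _
      _ ≤ |A₁ - A₀| * |Hf φ n (t - 1/2)| := by
          exact mul_le_mul_of_nonneg_left h1 (le_of_lt hAne)
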